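/- Let G = (V,E) be a finite directed graph and for each node i let t_i ≥ 0, and φ_ij ∈ [0,1] for j ∈ O(i) ∪ {0} with ∑_{j∈O(i)∪{0}} φ_ij = 1. Define f_ij = t_i φ_ij for (i,j) ∈ E, g_i = t_i φ_i0, and suppose t_i = r_i + ∑_{j∈I(i)} f_ji with r_i ≥ 0. Let λ_i be reals satisfying, for some δ_ij ≥ λ_i with δ_ij = d_ij + λ_j for j ∈ O(i) and δ_i0 = c_i, the condition λ_i = ∑_{j∈O(i)∪{0}} φ_ij δ_ij. Then ∑_{i∈V}(c_i g_i + ∑_{j∈O(i)} d_ij f_ij) = ∑_{i∈V} λ_i r_i. -/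
import Mathlib


theorem stmt_9 {V : Type*} [Fintype V] [DecidableEq V]
    (O : V → Finset V) (t r : V → ℝ) (φ φ0 : V → V → ℝ) (φc : V → ℝ)
    (f : V → V → ℝ) (g : V → ℝ) (d : V → V → ℝ) (cc : V → ℝ)
    (δ : V → V → ℝ) (δ0 : V → ℝ) (lam : V → ℝ)
    (ht : ∀ i, 0 ≤ t i) (hr : ∀ i, 0 ≤ r i)
    (hφ : ∀ i j, j ∈ O i → φ i j ∈ Set.Icc (0 : ℝ) 1)
    (hφc : ∀ i, φc i ∈ Set.Icc (0 : ℝ) 1)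
    (hφsum : ∀ i, φc i + ∑ j ∈ O i, φ i j = 1)
    (hf : ∀ i j, j ∈ O i → f i j = t i * φ i j)
    (hg : ∀ i, g i = t i * φc i)
    (htrec : ∀ i, t i = r i + ∑ j ∈ Finset.univ.filter (fun j => i ∈ O j), f j i)
    (hδge : ∀ i j, j ∈ O i → δ i j ≥ lam i) (hδ0ge : ∀ i, δ0 i ≥ lam i)
    (hδ : ∀ i j, j ∈ O i → δ i j = d i j + lam j)
    (hδ0 : ∀ i, δ0 i = cc i)
    (hlam : ∀ i, lam i = φc i * δ0 i + ∑ j ∈ O i, φ i j * δ i j) :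
    ∑ i, (cc i * g i + ∑ j ∈ O i, d i j * f i j) = ∑ i, lam i * r i := by
  have h1 : ∀ i, lam i * t i =
      (cc i * g i + ∑ j ∈ O i, d i j * f i j) + ∑ j ∈ O i, f i j * lam j := by
    intro i
    calc lam i * t i = φc i * cc i * t i + ∑ j ∈ O i, φ i j * δ i j * t i := by
          rw [hlam i, hδ0 i, add_mul, Finset.sum_mul]
      _ = cc i * g i + ∑ j ∈ O i, (d i j * f i j + f i j * lam j) := by
          rw [hg i]
          congr 1
          · ring
          · exact Finset.sum_congr rfl fun j hj => by
              rw [hδ i j hj, hf i j hj]; ring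
      _ = _ := by rw [Finset.sum_add_distrib, add_assoc]
  have h2 : ∀ i, lam i * t i =
      lam i * r i + ∑ j ∈ Finset.univ.filter (fun j => i ∈ O j), f j i * lam i := by
    intro i
    rw [htrec i, mul_add, Finset.mul_sum]
    congr 1
    exact Finset.sum_congr rfl (fun j _ => by ring)
  have swap : ∑ i : V, ∑ j ∈ Finset.univ.filter (fun j => i ∈ O j), f j i * lam i
      = ∑ i : V, ∑ j ∈ O i, f i j * lam j := by
    simp_rw [Finset.sum_filter]
    rw [Finset.sum_comm]
    refine Finset.sum_congr rfl (fun j _ => ?_)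
    simp [Finset.sum_ite_mem]
  have key := Finset.sum_congr rfl (fun i (_ : i ∈ Finset.univ) => (h1 i).symm.trans (h2 i))
  have hR : ∑ i : V, (lam i * r i + ∑ j ∈ Finset.univ.filter (fun j => i ∈ O j), f j i * lam i)
      = ∑ i : V, lam i * r i + ∑ i : V, ∑ j ∈ O i, f i j * lam j := by
    rw [Finset.sum_add_distrib, swap]
  rw [hR, Finset.sum_add_distrib, Finset.sum_add_distrib] at key
  rw [Finset.sum_add_distrib]
  linarith
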